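/- Suppose there is some $C > 0$ such that $a_1 = 1$, $a_n \ge 1$ and $|a_{n+1} - a_n| \le C$ for all $n$, and $a_n \to \infty$. Then the sequence $(a_n)$ is good. -/
import Mathlib


open Filter

/-- A sequence `(aₙ)_{n ≥ 1}` of positive reals is *good* if for each sufficiently large `n`
there is a positive integer `Kₙ` with `Kₙ / log₂ aₙ → 1` as `n → ∞`, together with indices
`i₁ < i₂ < ⋯ < i_{Kₙ}` in `{1, …, n}` such that `i_{Kₙ} = n` and `a_{i_{k+1}} ≥ 2 a_{i_k}`
for `k = 1, …, Kₙ - 1`. -/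
def IsGoodSeq (a : ℕ → ℝ) : Prop :=
  ∃ K : ℕ → ℕ,
    Tendsto (fun n => (K n : ℝ) / Real.logb 2 (a n)) atTop (nhds 1) ∧
    ∀ᶠ n in atTop, 0 < K n ∧
      ∃ i : ℕ → ℕ,
        (∀ k, 1 ≤ k → k < K n → i k < i (k + 1)) ∧
        (∀ k, 1 ≤ k → k ≤ K n → 1 ≤ i k ∧ i k ≤ n) ∧
        i (K n) = n ∧
        (∀ k, 1 ≤ k → k < K n → 2 * a (i k) ≤ a (i (k + 1)))

open Classical in
/-- The largest index `m < j` (with `m ≥ 1`) such that `a m ≤ a j / 2`. -/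
noncomputable def prevIdx (a : ℕ → ℝ) (j : ℕ) : ℕ :=
  Nat.findGreatest (fun m => 0 < m ∧ a m ≤ a j / 2) (j - 1)

/-- The greedy backward chain starting at `n`. -/
noncomputable def chainIdx (a : ℕ → ℝ) (n : ℕ) : ℕ → ℕ
  | 0 => n
  | s + 1 => prevIdx a (chainIdx a n s)

/-- The first step at which the chain value drops below `2`. -/
noncomputable def stopIdx (a : ℕ → ℝ) (n : ℕ) : ℕ :=
  sInf {s | a (chainIdx a n s) < 2}

lemma prevIdx_props (a : ℕ → ℝ) (C : ℝ)
    (ha1 : a 1 = 1)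
    (ha_step : ∀ n, 1 ≤ n → |a (n + 1) - a n| ≤ C)
    (j : ℕ) (hj : 1 ≤ j) (hja : 2 ≤ a j) :
    1 ≤ prevIdx a j ∧ prevIdx a j < j ∧ a (prevIdx a j) ≤ a j / 2 ∧
      a j / 2 - C ≤ a (prevIdx a j) := by
  classical
  have hj2 : 2 ≤ j := by
    rcases Nat.lt_or_ge j 2 with h | h
    · interval_cases j
      rw [ha1] at hja; norm_num at hja
    · exact h
  have hP1 : (0 < 1 ∧ a 1 ≤ a j / 2) := by
    refine ⟨Nat.one_pos, ?_⟩; rw [ha1]; linarith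
  have h1le : 1 ≤ j - 1 := by omega
  unfold prevIdx
  set m := Nat.findGreatest (fun m => 0 < m ∧ a m ≤ a j / 2) (j - 1) with hm
  have hmle : m ≤ j - 1 := Nat.findGreatest_le _
  have hm1 : 1 ≤ m := Nat.le_findGreatest h1le hP1
  have hspec : 0 < m ∧ a m ≤ a j / 2 :=
    Nat.findGreatest_spec (P := fun m => 0 < m ∧ a m ≤ a j / 2) h1le hP1
  have hmlt : m < j := by omega
  refine ⟨hm1, hmlt, hspec.2, ?_⟩
  have hsucc : a j / 2 < a (m + 1) := by
    rcases Nat.lt_or_ge m (j - 1) with h | h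
    · have h2 := Nat.findGreatest_is_greatest (P := fun m => 0 < m ∧ a m ≤ a j / 2)
        (n := j - 1) (k := m + 1) (by omega) (by omega)
      have h3 : ¬(0 < m + 1 ∧ a (m + 1) ≤ a j / 2) := h2
      exact lt_of_not_ge fun hle => h3 ⟨Nat.succ_pos m, hle⟩
    · have : m + 1 = j := by omega
      rw [this]; linarith
  have habs := ha_step m hm1
  have := abs_le.mp habs
  linarith [this.1]

lemma chain_terminates (a : ℕ → ℝ) (C : ℝ)
    (ha1 : a 1 = 1)
    (ha_step : ∀ n, 1 ≤ n → |a (n + 1) - a n| ≤ C)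
    (n : ℕ) (hn : 1 ≤ n) :
    ∃ s, a (chainIdx a n s) < 2 := by
  by_contra h
  push_neg at h
  have key : ∀ s, 1 ≤ chainIdx a n s ∧ chainIdx a n s + s ≤ n := by
    intro s
    induction s with
    | zero => simp [chainIdx]; omega
    | succ s ih =>
      have hp := prevIdx_props a C ha1 ha_step (chainIdx a n s) ih.1 (h s)
      have : chainIdx a n (s + 1) = prevIdx a (chainIdx a n s) := rfl
      rw [this]
      constructor
      · exact hp.1
      · have := hp.2.1; omega
  have := key n
  omega

/-- **Proposition 6.** If `a₁ = 1`, `aₙ ≥ 1` and `|a_{n+1} - aₙ| ≤ C` for all `n ≥ 1`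
(for some `C > 0`), and `aₙ → ∞`, then the sequence `(aₙ)` is good. -/
theorem isGoodSeq_of_bounded_increments
    (a : ℕ → ℝ) (C : ℝ) (hC : 0 < C)
    (ha1 : a 1 = 1)
    (ha_ge : ∀ n, 1 ≤ n → 1 ≤ a n)
    (ha_step : ∀ n, 1 ≤ n → |a (n + 1) - a n| ≤ C)
    (ha_top : Tendsto a atTop atTop) :
    IsGoodSeq a := by
  set K : ℕ → ℕ := fun n => stopIdx a n + 1 with hK
  -- master facts for each n ≥ 1
  have master : ∀ n, 1 ≤ n →
      (∀ s ≤ stopIdx a n, 1 ≤ chainIdx a n s ∧ chainIdx a n s ≤ n) ∧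
      (∀ s < stopIdx a n, chainIdx a n (s + 1) < chainIdx a n s ∧
        2 * a (chainIdx a n (s + 1)) ≤ a (chainIdx a n s) ∧
        a (chainIdx a n s) ≤ 2 * a (chainIdx a n (s + 1)) + 2 * C) ∧
      a (chainIdx a n (stopIdx a n)) < 2 := by
    intro n hn
    have hex := chain_terminates a C ha1 ha_step n hn
    have hstop : a (chainIdx a n (stopIdx a n)) < 2 := Nat.sInf_mem hex
    have hpre : ∀ s < stopIdx a n, 2 ≤ a (chainIdx a n s) := by
      intro s hs
      have := Nat.notMem_of_lt_sInf (s := {s | a (chainIdx a n s) < 2}) hs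
      simpa using not_lt.mp this
    have hkey : ∀ s ≤ stopIdx a n, 1 ≤ chainIdx a n s ∧ chainIdx a n s ≤ n := by
      intro s hs
      induction s with
      | zero => simp [chainIdx]; omega
      | succ s ih =>
        have ih' := ih (by omega)
        have hp := prevIdx_props a C ha1 ha_step (chainIdx a n s) ih'.1 (hpre s (by omega))
        have hc : chainIdx a n (s + 1) = prevIdx a (chainIdx a n s) := rfl
        rw [hc]
        exact ⟨hp.1, le_trans (le_of_lt hp.2.1) ih'.2⟩
    refine ⟨hkey, ?_, hstop⟩
    intro s hs
    have h1 := (hkey s (le_of_lt hs)).1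
    have hp := prevIdx_props a C ha1 ha_step (chainIdx a n s) h1 (hpre s hs)
    have hc : chainIdx a n (s + 1) = prevIdx a (chainIdx a n s) := rfl
    rw [hc]
    exact ⟨hp.2.1, by linarith [hp.2.2.1], by linarith [hp.2.2.2]⟩
  -- growth bounds
  have bounds : ∀ n, 1 ≤ n →
      (2 : ℝ) ^ stopIdx a n ≤ a n ∧ a n ≤ 2 ^ stopIdx a n * (2 + 2 * C) := by
    intro n hn
    obtain ⟨hkey, hstep, hstop⟩ := master n hn
    set S := stopIdx a n with hSdef
    have main : ∀ t ≤ S, (2:ℝ) ^ t ≤ a (chainIdx a n (S - t)) ∧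
        a (chainIdx a n (S - t)) + 2 * C ≤ 2 ^ t * (2 + 2 * C) := by
      intro t ht
      induction t with
      | zero =>
        simp only [Nat.sub_zero, pow_zero, one_mul]
        exact ⟨ha_ge _ (hkey S le_rfl).1, by linarith⟩
      | succ t ih =>
        have ih' := ih (by omega)
        have hs : S - (t + 1) < S := by omega
        have hsub : S - (t + 1) + 1 = S - t := by omega
        have hst := hstep (S - (t + 1)) hs
        rw [hsub] at hst
        constructor
        · calc (2:ℝ) ^ (t + 1) = 2 * 2 ^ t := by ring
            _ ≤ 2 * a (chainIdx a n (S - t)) := by linarith [ih'.1]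
            _ ≤ a (chainIdx a n (S - (t + 1))) := hst.2.1
        · calc a (chainIdx a n (S - (t + 1))) + 2 * C
              ≤ 2 * (a (chainIdx a n (S - t)) + 2 * C) := by linarith [hst.2.2]
            _ ≤ 2 * (2 ^ t * (2 + 2 * C)) := by linarith [ih'.2]
            _ = 2 ^ (t + 1) * (2 + 2 * C) := by ring
    have := main S le_rfl
    simp only [Nat.sub_self] at this
    have hc0 : chainIdx a n 0 = n := rfl
    rw [hc0] at this
    exact ⟨this.1, by linarith [this.2]⟩
  refine ⟨K, ?_, ?_⟩
  · -- tendsto part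
    have hlogtop : Tendsto (fun n => Real.logb 2 (a n)) atTop atTop :=
      (Real.tendsto_logb_atTop (by norm_num)).comp ha_top
    set D : ℝ := Real.logb 2 (2 + 2 * C) + 1 with hD
    have hD1 : 1 ≤ D := by
      have : (0:ℝ) ≤ Real.logb 2 (2 + 2 * C) := by
        apply Real.logb_nonneg (by norm_num)
        linarith
      linarith
    have hbound : ∀ n, 1 ≤ n → |(K n : ℝ) - Real.logb 2 (a n)| ≤ D := by
      intro n hn
      obtain ⟨hlow, hup⟩ := bounds n hn
      have han : (0:ℝ) < a n := lt_of_lt_of_le one_pos (ha_ge n hn)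
      have h2S : (0:ℝ) < 2 ^ stopIdx a n := by positivity
      have hlog1 : (stopIdx a n : ℝ) ≤ Real.logb 2 (a n) := by
        have := (Real.logb_le_logb (by norm_num : (1:ℝ) < 2) h2S han).mpr hlow
        rwa [Real.logb_pow, Real.logb_self_eq_one (by norm_num : (1:ℝ) < 2),
          mul_one] at this
      have hlog2 : Real.logb 2 (a n) ≤ (stopIdx a n : ℝ) + Real.logb 2 (2 + 2 * C) := by
        have h1 := (Real.logb_le_logb (by norm_num : (1:ℝ) < 2) han
          (by positivity)).mpr hup
        rwa [Real.logb_mul (ne_of_gt h2S) (by positivity), Real.logb_pow,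
          Real.logb_self_eq_one (by norm_num : (1:ℝ) < 2), mul_one] at h1
      rw [abs_le]
      have : (K n : ℝ) = (stopIdx a n : ℝ) + 1 := by
        simp [hK]
      rw [this]
      constructor <;> [linarith; linarith]
    have hsub : Tendsto (fun n => (K n : ℝ) / Real.logb 2 (a n) - 1) atTop (nhds 0) := by
      apply squeeze_zero_norm' (a := fun n => D / Real.logb 2 (a n))
      · filter_upwards [hlogtop.eventually_ge_atTop 1, eventually_ge_atTop 1] with n hl hn
        have hlpos : 0 < Real.logb 2 (a n) := lt_of_lt_of_le one_pos hl
        have : (K n : ℝ) / Real.logb 2 (a n) - 1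
            = ((K n : ℝ) - Real.logb 2 (a n)) / Real.logb 2 (a n) := by
          field_simp
        rw [Real.norm_eq_abs, this, abs_div, abs_of_pos hlpos]
        exact (div_le_div_iff_of_pos_right hlpos).mpr (hbound n hn)
      · exact Tendsto.div_atTop tendsto_const_nhds hlogtop
    have := hsub.add (tendsto_const_nhds (x := (1:ℝ)))
    simpa using this
  · -- eventual chain part
    filter_upwards [eventually_ge_atTop 1] with n hn
    obtain ⟨hkey, hstep, hstop⟩ := master n hn
    have hKn : K n = stopIdx a n + 1 := rfl
    refine ⟨by simp [hKn], fun k => chainIdx a n (K n - k), ?_, ?_, ?_, ?_⟩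
    · intro k hk1 hk2
      show chainIdx a n (K n - k) < chainIdx a n (K n - (k + 1))
      have h1 : K n - k = (K n - (k + 1)) + 1 := by omega
      rw [h1]
      exact (hstep (K n - (k + 1)) (by omega)).1
    · intro k hk1 hk2
      exact hkey (K n - k) (by omega)
    · show chainIdx a n (K n - K n) = n
      rw [Nat.sub_self]
      rfl
    · intro k hk1 hk2
      show 2 * a (chainIdx a n (K n - k)) ≤ a (chainIdx a n (K n - (k + 1)))
      have h1 : K n - k = (K n - (k + 1)) + 1 := by omega
      rw [h1]
      exact (hstep (K n - (k + 1)) (by omega)).2.1
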